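/- Let V be a real Hilbert space decomposed as V = V_0 ⊕ V_1 (B-orthogonal direct sum), and let C be a symmetric bounded bilinear form on V that is negative definite on V_0 × V_0, positive definite (coercive) on V_1 × V_1, and satisfies C(w_0, v) = C(w_0, Qv) and C(w_1, v) = C(w_1, (I−Q)v) for w_0 ∈ V_0, w_1 ∈ V_1, where Q is the projection onto V_0. Then for every bounded linear functional f on V there exists a unique w ∈ V with C(w, v) = f(v) for all v ∈ V. -/

import Mathlib

/-- unique solvability of `C(w,·) = f` for a symmetric bounded bilinear
form `C` that is negative definite on `V₀` and positive definite on `V₁`, where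
`V = V₀ ⊕ V₁` with projection `Q` onto `V₀`, `I − Q` onto `V₁`, and the
cross-orthogonality conditions hold. -/
theorem hadamard_stmt6
    {V : Type*} [NormedAddCommGroup V] [InnerProductSpace ℝ V] [CompleteSpace V]
    (V₀ V₁ : Submodule ℝ V) (hcompl : IsCompl V₀ V₁)
    (Q : V →L[ℝ] V)
    (hQproj : ∀ v : V, Q v ∈ V₀) (hQid : ∀ v ∈ V₀, Q v = v)
    (hQ'proj : ∀ v : V, v - Q v ∈ V₁)
    (C : V →ₗ[ℝ] V →ₗ[ℝ] ℝ)
    (hCsymm : ∀ u v : V, C u v = C v u)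
    (M : ℝ) (hCbdd : ∀ u v : V, |C u v| ≤ M * ‖u‖ * ‖v‖)
    (δ₀ : ℝ) (hδ₀ : 0 < δ₀) (hneg : ∀ v ∈ V₀, C v v ≤ -δ₀ * ‖v‖ ^ 2)
    (δ₁ : ℝ) (hδ₁ : 0 < δ₁) (hpos : ∀ v ∈ V₁, δ₁ * ‖v‖ ^ 2 ≤ C v v)
    (hcross₀ : ∀ w₀ ∈ V₀, ∀ v : V, C w₀ v = C w₀ (Q v))
    (hcross₁ : ∀ w₁ ∈ V₁, ∀ v : V, C w₁ v = C w₁ (v - Q v))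
    (f : V →L[ℝ] ℝ) :
    ∃! w : V, ∀ v : V, C w v = f v := by
  -- Q vanishes on V₁
  have hQ1 : ∀ u ∈ V₁, Q u = 0 := by
    intro u hu
    have h0 : Q u ∈ V₀ := hQproj u
    have h1 : Q u ∈ V₁ := by
      have heq : Q u = u - (u - Q u) := by abel
      rw [heq]
      exact V₁.sub_mem hu (hQ'proj u)
    exact (Submodule.disjoint_def.mp hcompl.disjoint) _ h0 h1
  -- cross terms vanish
  have hC01 : ∀ v₀ ∈ V₀, ∀ v₁ ∈ V₁, C v₀ v₁ = 0 := by
    intro v₀ h₀ v₁ h₁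
    rw [hcross₀ v₀ h₀ v₁, hQ1 v₁ h₁, map_zero]
  have hC10 : ∀ v₁ ∈ V₁, ∀ v₀ ∈ V₀, C v₁ v₀ = 0 := by
    intro v₁ h₁ v₀ h₀
    rw [hcross₁ v₁ h₁ v₀, hQid v₀ h₀, sub_self, map_zero]
  -- continuous version of C
  have hCbdd' : ∀ u v : V, ‖C u v‖ ≤ |M| * ‖u‖ * ‖v‖ := fun u v => by
    refine (hCbdd u v).trans ?_
    have h1 : (0:ℝ) ≤ ‖u‖ := norm_nonneg u
    have h2 : (0:ℝ) ≤ ‖v‖ := norm_nonneg v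
    exact mul_le_mul_of_nonneg_right
      (mul_le_mul_of_nonneg_right (le_abs_self M) h1) h2
  let Cc : V →L[ℝ] V →L[ℝ] ℝ := LinearMap.mkContinuous₂ C |M| hCbdd'
  have hCcapp : ∀ u v : V, Cc u v = C u v := fun u v => rfl
  -- the involution T v = v - 2 Q v
  let T : V →L[ℝ] V := ContinuousLinearMap.id ℝ V - (2 : ℝ) • Q
  have hTapp : ∀ v : V, T v = v - (2 : ℝ) • Q v := fun v => rfl
  have hTT : ∀ v : V, T (T v) = v := by
    intro v
    have hQQ : Q (Q v) = Q v := hQid _ (hQproj v)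
    have hQT : Q (T v) = - Q v := by
      rw [hTapp, map_sub, map_smul, hQQ]; module
    rw [hTapp (T v), hQT, hTapp v]; module
  -- the flipped bilinear form D u v = C u (T v)
  let D : V →L[ℝ] V →L[ℝ] ℝ := ((Cc.flip).comp T).flip
  have hDapp : ∀ u v : V, D u v = C u (T v) := fun u v => rfl
  -- coercivity of D
  have hcpos : 0 < min δ₀ δ₁ / 2 := by positivity
  have hcoer : IsCoercive D := by
    refine ⟨min δ₀ δ₁ / 2, hcpos, fun v => ?_⟩
    have h₀ : Q v ∈ V₀ := hQproj v
    have h₁ : v - Q v ∈ V₁ := hQ'proj v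
    have a1 : C (Q v) (v - Q v) = 0 := hC01 _ h₀ _ h₁
    have a2 : C (v - Q v) (Q v) = 0 := hC10 _ h₁ _ h₀
    have general : C (Q v + (v - Q v)) ((v - Q v) - Q v)
        = -(C (Q v) (Q v)) + C (v - Q v) (v - Q v) := by
      simp only [map_add, map_sub, LinearMap.add_apply, LinearMap.sub_apply] at a1 a2 ⊢
      linarith
    have hsp : v = Q v + (v - Q v) := by abel
    have e2 : T v = (v - Q v) - Q v := by rw [hTapp]; module
    have hDvv : D v v = -(C (Q v) (Q v)) + C (v - Q v) (v - Q v) := by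
      rw [hDapp]
      rw [show C v (T v) = C (Q v + (v - Q v)) ((v - Q v) - Q v) from
        congrArg₂ (fun a b : V => C a b) hsp e2]
      exact general
    have e0 : δ₀ * ‖Q v‖ ^ 2 ≤ -(C (Q v) (Q v)) := by
      have := hneg (Q v) h₀; linarith
    have e1 : δ₁ * ‖v - Q v‖ ^ 2 ≤ C (v - Q v) (v - Q v) := hpos _ h₁
    have hnorm : ‖v‖ ^ 2 ≤ 2 * (‖Q v‖ ^ 2 + ‖v - Q v‖ ^ 2) := by
      have h : ‖v‖ ≤ ‖Q v‖ + ‖v - Q v‖ := by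
        calc ‖v‖ = ‖Q v + (v - Q v)‖ := congrArg norm hsp
        _ ≤ ‖Q v‖ + ‖v - Q v‖ := norm_add_le _ _
      have h2 : (0:ℝ) ≤ ‖v‖ := norm_nonneg v
      nlinarith [sq_nonneg (‖Q v‖ - ‖v - Q v‖)]
    have hm0 : min δ₀ δ₁ ≤ δ₀ := min_le_left _ _
    have hm1 : min δ₀ δ₁ ≤ δ₁ := min_le_right _ _
    have t0 : (0:ℝ) ≤ ‖Q v‖ ^ 2 := sq_nonneg _
    have t1 : (0:ℝ) ≤ ‖v - Q v‖ ^ 2 := sq_nonneg _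
    calc min δ₀ δ₁ / 2 * ‖v‖ * ‖v‖ = min δ₀ δ₁ / 2 * ‖v‖ ^ 2 := by ring
    _ ≤ -(C (Q v) (Q v)) + C (v - Q v) (v - Q v) := by nlinarith
    _ = D v v := hDvv.symm
  -- Lax-Milgram
  let g : V →L[ℝ] ℝ := f.comp T
  let w : V := hcoer.continuousLinearEquivOfBilin.symm
    ((InnerProductSpace.toDual ℝ V).symm g)
  have hDwv : ∀ v : V, D w v = g v := by
    intro v
    rw [← hcoer.continuousLinearEquivOfBilin_apply w v]
    show (inner ℝ (hcoer.continuousLinearEquivOfBilin w) v : ℝ) = g v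
    rw [show hcoer.continuousLinearEquivOfBilin w
        = (InnerProductSpace.toDual ℝ V).symm g from
      hcoer.continuousLinearEquivOfBilin.apply_symm_apply _]
    exact InnerProductSpace.toDual_symm_apply
  refine ⟨w, ?_, ?_⟩
  · intro v
    have h1 := hDwv (T v)
    rw [hDapp, hTT] at h1
    rw [h1]
    show f (T (T v)) = f v
    rw [hTT]
  · intro w' hw'
    have hdiff : ∀ v : V, D (w' - w) v = 0 := by
      intro v
      have hdw' : D w' v = g v := by
        rw [hDapp, hw' (T v)]; rfl
      simp only [map_sub, ContinuousLinearMap.sub_apply]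
      rw [hdw', hDwv v, sub_self]
    obtain ⟨c', hc', h⟩ := hcoer
    have h2 : w' - w = 0 := by
      by_contra hne
      have hpn : 0 < ‖w' - w‖ := norm_pos_iff.mpr hne
      have hh := h (w' - w)
      rw [hdiff (w' - w)] at hh
      nlinarith [mul_pos (mul_pos hc' hpn) hpn]
    exact sub_eq_zero.mp h2
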